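/- Entropy conservation of the split-form SBP scheme with the logarithmic-mean flux for linear advection: let D and M be N×N real matrices such that M is diagonal with positive diagonal entries, M D + Dᵀ M = 0, and every row of D sums to zero. Let u : I → (0, ∞)^N be a differentiable solution of the split-form semidiscretization of the linear advection equation, ∂_t u_i + Σ_l 2 D_{i,l} ℓ(u_i, u_l) = 0, where ℓ(a, b) = (a − b)/(log a − log b) for a ≠ b and ℓ(a, a) = a is the logarithmic mean. Then the total discrete entropy Σ_i M_{ii} ( u_i log u_i − u_i ) is constant in time. -/

import Mathlib

noncomputable section
open Real BigOperators

/-- The logarithmic mean, extended along the diagonal: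
`ℓ(a, b) = (a - b)/(log a - log b)` for `a ≠ b`, `ℓ(a, a) = a`. -/
def logMeanFlux (a b : ℝ) : ℝ :=
  if a = b then a else (a - b) / (Real.log a - Real.log b)

lemma logMeanFlux_symm (a b : ℝ) : logMeanFlux a b = logMeanFlux b a := by
  unfold logMeanFlux
  rcases eq_or_ne a b with h | h
  · simp [h]
  · rw [if_neg h, if_neg (Ne.symm h), ← neg_sub b a, ← neg_sub (Real.log b),
      neg_div_neg_eq]

lemma logMeanFlux_key {a b : ℝ} (ha : 0 < a) (hb : 0 < b) :
    (Real.log a - Real.log b) * logMeanFlux a b = a - b := by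
  unfold logMeanFlux
  rcases eq_or_ne a b with h | h
  · simp [h]
  · rw [if_neg h]
    have hlog : Real.log a - Real.log b ≠ 0 := by
      intro hc
      exact h (Real.log_injOn_pos (Set.mem_Ioi.mpr ha) (Set.mem_Ioi.mpr hb)
        (sub_eq_zero.mp hc))
    field_simp

/-- entropy conservation of the split-form SBP scheme with the
logarithmic-mean two-point flux for the linear advection equation. If `(D, M)` is
a periodic SBP operator pair (`M` diagonal positive, `M D + Dᵀ M = 0`, rows of `D`
sum to zero) and `u` is a positive differentiable solution of
`∂ₜ u_i + Σ_l 2 D_{i,l} ℓ(u_i, u_l) = 0` on an open interval `I`, then the total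
discrete entropy `Σ_i M_{ii} (u_i log u_i - u_i)` is constant in time. -/
theorem sbp_logmean_entropy_conservation
    (N : ℕ) (D M : Matrix (Fin N) (Fin N) ℝ)
    (hMdiag : ∀ i j, i ≠ j → M i j = 0) (hMpos : ∀ i, 0 < M i i)
    (hSBP : M * D + D.transpose * M = 0)
    (hDcons : ∀ i, ∑ l, D i l = 0)
    (I : Set ℝ) (hIopen : IsOpen I) (hIconv : Convex ℝ I)
    (u : ℝ → Fin N → ℝ)
    (hupos : ∀ t ∈ I, ∀ i, 0 < u t i)
    (hode : ∀ t ∈ I, ∀ i : Fin N,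
      HasDerivAt (fun τ => u τ i)
        (-(∑ l, 2 * D i l * logMeanFlux (u t i) (u t l))) t) :
    ∀ t₁ ∈ I, ∀ t₂ ∈ I,
      ∑ i, M i i * (u t₁ i * Real.log (u t₁ i) - u t₁ i)
        = ∑ i, M i i * (u t₂ i * Real.log (u t₂ i) - u t₂ i) := by
  -- antisymmetry of A = M D
  have hanti : ∀ i l, M i i * D i l = -(M l l * D l i) := by
    intro i l
    have h0 := congrFun (congrFun hSBP i) l
    simp only [Matrix.add_apply, Matrix.mul_apply, Matrix.transpose_apply,
      Matrix.zero_apply] at h0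
    have h1 : ∑ k, M i k * D k l = M i i * D i l := by
      rw [Finset.sum_eq_single i]
      · intro k _ hk; rw [hMdiag i k (Ne.symm hk), zero_mul]
      · intro hk; exact absurd (Finset.mem_univ i) hk
    have h2 : ∑ k, D k i * M k l = D l i * M l l := by
      rw [Finset.sum_eq_single l]
      · intro k _ hk; rw [hMdiag k l hk, mul_zero]
      · intro hk; exact absurd (Finset.mem_univ l) hk
    rw [h1, h2] at h0
    linarith
  set E : ℝ → ℝ := fun t => ∑ i, M i i * (u t i * Real.log (u t i) - u t i) with hE
  have hderiv : ∀ t ∈ I, HasDerivAt E 0 t := by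
    intro t ht
    set d : Fin N → ℝ := fun i =>
      -(∑ l, 2 * D i l * logMeanFlux (u t i) (u t l)) with hd
    have hterm : ∀ i : Fin N, HasDerivAt
        (fun τ => M i i * (u τ i * Real.log (u τ i) - u τ i))
        (M i i * (Real.log (u t i) * d i)) t := by
      intro i
      have hu : HasDerivAt (fun τ => u τ i) (d i) t := hode t ht i
      have hne : u t i ≠ 0 := (hupos t ht i).ne'
      have hlog : HasDerivAt (fun τ => Real.log (u τ i)) (d i / u t i) t := hu.log hne
      have h1 : HasDerivAt (fun τ => u τ i * Real.log (u τ i) - u τ i)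
          (d i * Real.log (u t i) + u t i * (d i / u t i) - d i) t :=
        (hu.mul hlog).sub hu
      have h2 : d i * Real.log (u t i) + u t i * (d i / u t i) - d i
          = Real.log (u t i) * d i := by field_simp; ring
      exact ((h2 ▸ h1).const_mul (M i i))
    have hsum : HasDerivAt E (∑ i, M i i * (Real.log (u t i) * d i)) t := by
      rw [hE]
      exact HasDerivAt.fun_sum fun i _ => hterm i
    have hzero : (∑ i, M i i * (Real.log (u t i) * d i)) = 0 := by
      -- S := Σ_i Σ_l 2 (M_ii D_il) log u_i ℓ_il
      set S : ℝ := ∑ i, ∑ l, 2 * (M i i * D i l) *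
        Real.log (u t i) * logMeanFlux (u t i) (u t l) with hS
      have hEq : (∑ i, M i i * (Real.log (u t i) * d i)) = -S := by
        rw [hS, ← Finset.sum_neg_distrib]
        refine Finset.sum_congr rfl fun i _ => ?_
        have hdi : d i = -∑ l, 2 * D i l * logMeanFlux (u t i) (u t l) := rfl
        rw [hdi, mul_neg, mul_neg, neg_inj,
          Finset.mul_sum, Finset.mul_sum]
        refine Finset.sum_congr rfl fun l _ => ?_
        ring
      -- second form of S via swapping
      have hS2 : S = ∑ i, ∑ l, -(2 * (M i i * D i l) *
          Real.log (u t l) * logMeanFlux (u t i) (u t l)) := by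
        rw [hS, Finset.sum_comm]
        refine Finset.sum_congr rfl fun l _ => Finset.sum_congr rfl fun i _ => ?_
        rw [hanti i l, logMeanFlux_symm (u t i) (u t l)]
        ring
      have h2S : 2 * S = ∑ i, ∑ l, 2 * (M i i * D i l) * (u t i - u t l) := by
        have : 2 * S = S + S := by ring
        rw [this]
        nth_rewrite 1 [hS]
        nth_rewrite 1 [hS2]
        rw [← Finset.sum_add_distrib]
        refine Finset.sum_congr rfl fun i _ => ?_
        rw [← Finset.sum_add_distrib]
        refine Finset.sum_congr rfl fun l _ => ?_
        have hk := logMeanFlux_key (hupos t ht i) (hupos t ht l)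
        linear_combination 2 * (M i i * D i l) * hk
      have hsplit : (∑ i, ∑ l, 2 * (M i i * D i l) * (u t i - u t l)) = 0 := by
        have hA : (∑ i, ∑ l, 2 * (M i i * D i l) * u t i) = 0 := by
          refine Finset.sum_eq_zero fun i _ => ?_
          have : (∑ l, 2 * (M i i * D i l) * u t i)
              = 2 * M i i * u t i * ∑ l, D i l := by
            rw [Finset.mul_sum]; refine Finset.sum_congr rfl fun l _ => by ring
          rw [this, hDcons i, mul_zero]
        have hB : (∑ i, ∑ l, 2 * (M i i * D i l) * u t l) = 0 := by
          rw [Finset.sum_comm]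
          refine Finset.sum_eq_zero fun l _ => ?_
          have : (∑ i, 2 * (M i i * D i l) * u t l)
              = -(2 * M l l * u t l * ∑ i, D l i) := by
            rw [Finset.mul_sum, ← Finset.sum_neg_distrib]
            refine Finset.sum_congr rfl fun i _ => by rw [hanti i l]; ring
          rw [this, hDcons l, mul_zero, neg_zero]
        calc (∑ i, ∑ l, 2 * (M i i * D i l) * (u t i - u t l))
            = (∑ i, ∑ l, 2 * (M i i * D i l) * u t i)
              - (∑ i, ∑ l, 2 * (M i i * D i l) * u t l) := by
              rw [← Finset.sum_sub_distrib]
              refine Finset.sum_congr rfl fun i _ => ?_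
              rw [← Finset.sum_sub_distrib]
              exact Finset.sum_congr rfl fun l _ => by ring
          _ = 0 := by rw [hA, hB, sub_zero]
      have : S = 0 := by linarith [h2S, hsplit.symm ▸ h2S]
      rw [hEq, this, neg_zero]
    exact hzero ▸ hsum
  intro t₁ ht₁ t₂ ht₂
  have hdiff : DifferentiableOn ℝ E I := fun t ht =>
    ((hderiv t ht).differentiableAt).differentiableWithinAt
  refine hIconv.is_const_of_fderivWithin_eq_zero hdiff (fun t ht => ?_) ht₁ ht₂
  have h1 : fderiv ℝ E t = 0 := by
    rw [(hderiv t ht).hasFDerivAt.fderiv]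
    ext
    simp
  rw [fderivWithin_of_isOpen hIopen ht, h1]
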